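/- arXiv:2501.12773 — 2 statements merged into one kernel-verified Lean document; each statement's English description precedes it below -/
import Mathlib

section
/- If C_ss is positive definite and Z ∈ ℂ^{m×n} has rank n (full column rank), then as the noise scaling goes to zero, i.e., y = √ρ Z s + w with C_ww = σ² I fixed and ρ → ∞, the LMMSE error covariance C_ss − ρ C_ss Z^H (ρ Z C_ss Z^H + σ² I)^{-1} Z C_ss converges to the zero matrix. -/
open ComplexOrder Matrix Filter

/-- A positive real multiple of a positive definite complex matrix is positive definite. -/
lemma aux_posDef_smul {k : ℕ} {M : Matrix (Fin k) (Fin k) ℂ} (hM : M.PosDef)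
    {r : ℝ} (hr : 0 < r) : ((r : ℂ) • M).PosDef := by
  refine Matrix.PosDef.of_dotProduct_mulVec_pos ?_ (fun x hx => ?_)
  · show ((r : ℂ) • M)ᴴ = (r : ℂ) • M
    rw [conjTranspose_smul, hM.1.eq, Complex.star_def, Complex.conj_ofReal]
  · rw [smul_mulVec, dotProduct_smul, smul_eq_mul]
    exact mul_pos (Complex.zero_lt_real.mpr hr) (hM.dotProduct_mulVec_pos hx)

/-- A nonnegative real multiple of a positive semidefinite complex matrix is
positive semidefinite. -/
lemma aux_posSemidef_smul {k : ℕ} {M : Matrix (Fin k) (Fin k) ℂ} (hM : M.PosSemidef)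
    {r : ℝ} (hr : 0 ≤ r) : ((r : ℂ) • M).PosSemidef := by
  refine Matrix.PosSemidef.of_dotProduct_mulVec_nonneg ?_ (fun x => ?_)
  · show ((r : ℂ) • M)ᴴ = (r : ℂ) • M
    rw [conjTranspose_smul, hM.1.eq, Complex.star_def, Complex.conj_ofReal]
  · rw [smul_mulVec, dotProduct_smul, smul_eq_mul]
    exact mul_nonneg (Complex.zero_le_real.mpr hr) (hM.dotProduct_mulVec_nonneg x)

/-- If `Z` has full column rank then `Zᴴ * Z` is positive definite. -/
lemma aux_posDef_conjTranspose_mul_self {m n : ℕ} (Z : Matrix (Fin m) (Fin n) ℂ)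
    (hrank : Z.rank = n) : (Zᴴ * Z).PosDef := by
  have hinj : Function.Injective Z.mulVec := by
    have h1 : Module.finrank ℂ (LinearMap.range Z.mulVecLin) = n := hrank
    have h2 := LinearMap.finrank_range_add_finrank_ker Z.mulVecLin
    rw [h1] at h2
    simp only [Module.finrank_pi, Fintype.card_fin] at h2
    have hker : LinearMap.ker Z.mulVecLin = ⊥ :=
      Submodule.finrank_eq_zero.mp (by omega)
    have := LinearMap.ker_eq_bot.mp hker
    exact this
  refine Matrix.PosDef.of_dotProduct_mulVec_pos (Matrix.posSemidef_conjTranspose_mul_self Z).1 (fun x hx => ?_)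
  have hZx : Z *ᵥ x ≠ 0 := by
    intro h
    exact hx (hinj (h.trans (Matrix.mulVec_zero Z).symm))
  have hdp : star x ⬝ᵥ (Zᴴ * Z) *ᵥ x = star (Z *ᵥ x) ⬝ᵥ (Z *ᵥ x) := by
    rw [← Matrix.mulVec_mulVec, Matrix.dotProduct_mulVec, ← Matrix.star_mulVec]
  rw [hdp]
  exact Matrix.dotProduct_star_self_pos_iff.mpr hZx

/-- If `C_ss ≻ 0` and `Z` has full column rank, then as `ρ → ∞` the LMMSE error
covariance `C_ss − ρ C_ss Zᴴ (ρ Z C_ss Zᴴ + σ² I)⁻¹ Z C_ss` converges to `0`. -/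
theorem stmt8 {m n : ℕ} (Z : Matrix (Fin m) (Fin n) ℂ)
    (Css : Matrix (Fin n) (Fin n) ℂ) (σ : ℝ) (hσ : 0 < σ)
    (hss : Css.PosDef) (hrank : Z.rank = n) :
    Tendsto (fun ρ : ℝ =>
        Css - (ρ : ℂ) •
          (Css * Zᴴ * ((ρ : ℂ) • (Z * Css * Zᴴ) + (σ ^ 2 : ℂ) • (1 : Matrix (Fin m) (Fin m) ℂ))⁻¹
            * Z * Css))
      atTop (nhds 0) := by
  have hK : (Zᴴ * Z).PosDef := aux_posDef_conjTranspose_mul_self Z hrank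
  set K : Matrix (Fin n) (Fin n) ℂ := Zᴴ * Z with hKdef
  have hS : (Z * Css * Zᴴ).PosSemidef := hss.posSemidef.mul_mul_conjTranspose_same Z
  have hσ2 : (0:ℝ) < σ ^ 2 := by positivity
  have hs_cast : (σ ^ 2 : ℂ) = ((σ ^ 2 : ℝ) : ℂ) := by push_cast; ring
  have hs_ne : (σ ^ 2 : ℂ) ≠ 0 := by
    rw [hs_cast]; exact_mod_cast hσ2.ne'
  have hsinv_cast : (σ ^ 2 : ℂ)⁻¹ = (((σ ^ 2)⁻¹ : ℝ) : ℂ) := by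
    rw [hs_cast, Complex.ofReal_inv]
  set N : ℝ → Matrix (Fin n) (Fin n) ℂ :=
    fun ρ => ((ρ : ℂ))⁻¹ • Css⁻¹ + (σ ^ 2 : ℂ)⁻¹ • K with hNdef
  set L : Matrix (Fin n) (Fin n) ℂ := (σ ^ 2 : ℂ)⁻¹ • K with hLdef
  have hL : L.PosDef := by
    rw [hLdef, hsinv_cast]
    exact aux_posDef_smul hK (by positivity)
  have hNpos : ∀ ρ : ℝ, 0 < ρ → (N ρ).PosDef := by
    intro ρ hρ
    have h1 : (((ρ : ℂ))⁻¹ • Css⁻¹).PosSemidef := by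
      have hcast : ((ρ : ℂ))⁻¹ = ((ρ⁻¹ : ℝ) : ℂ) := by push_cast; ring
      rw [hcast]
      exact aux_posSemidef_smul hss.inv.posSemidef (by positivity)
    have h2 : ((σ ^ 2 : ℂ)⁻¹ • K).PosDef := by
      rw [hsinv_cast]; exact aux_posDef_smul hK (by positivity)
    exact Matrix.PosDef.posSemidef_add h1 h2
  -- key algebraic identity for ρ > 0, via the Woodbury identity
  have key : ∀ ρ : ℝ, 0 < ρ →
      Css - (ρ : ℂ) •
          (Css * Zᴴ * ((ρ : ℂ) • (Z * Css * Zᴴ) + (σ ^ 2 : ℂ) • (1 : Matrix (Fin m) (Fin m) ℂ))⁻¹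
            * Z * Css)
        = ((ρ : ℂ))⁻¹ • (N ρ)⁻¹ := by
    intro ρ hρ
    set c : ℂ := (ρ : ℂ) with hcdef
    have hc : c ≠ 0 := by
      rw [hcdef]; exact_mod_cast hρ.ne'
    set s : ℂ := (σ ^ 2 : ℂ) with hsdef
    set M : Matrix (Fin m) (Fin m) ℂ := c • (Z * Css * Zᴴ) + s • 1 with hMdef
    have hM : M.PosDef := by
      have h1 : (c • (Z * Css * Zᴴ)).PosSemidef := aux_posSemidef_smul hS hρ.le
      have h2 : (s • (1 : Matrix (Fin m) (Fin m) ℂ)).PosDef := by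
        rw [hs_cast]
        exact aux_posDef_smul Matrix.PosDef.one hσ2
      exact Matrix.PosDef.posSemidef_add h1 h2
    have hMdet : IsUnit M.det := (Matrix.isUnit_iff_isUnit_det M).mp hM.isUnit
    have hdet : IsUnit Css.det := (Matrix.isUnit_iff_isUnit_det Css).mp hss.isUnit
    have hCssii : Css⁻¹⁻¹ = Css := Css.nonsing_inv_nonsing_inv hdet
    set k : ℂ := c * s⁻¹ with hkdef
    have hk : k ≠ 0 := mul_ne_zero hc (inv_ne_zero hs_ne)
    set C : Matrix (Fin m) (Fin m) ℂ := k • 1 with hCdef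
    have hCunit : IsUnit C := by
      rw [Matrix.isUnit_iff_isUnit_det, hCdef, det_smul, det_one, mul_one]
      exact (pow_ne_zero _ hk).isUnit
    have hCinv : C⁻¹ = (c⁻¹ * s) • (1 : Matrix (Fin m) (Fin m) ℂ) := by
      apply Matrix.inv_eq_right_inv
      rw [hCdef, smul_mul_smul_comm, one_mul]
      have : k * (c⁻¹ * s) = 1 := by
        rw [hkdef]; field_simp
      rw [this, one_smul]
    have hMscaled : (c⁻¹ * s) • (1 : Matrix (Fin m) (Fin m) ℂ) + Z * Css * Zᴴ
        = c⁻¹ • M := by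
      rw [hMdef, smul_add, smul_smul, smul_smul, inv_mul_cancel₀ hc, one_smul, add_comm]
    have hMinv : (c⁻¹ • M)⁻¹ = c • M⁻¹ := by
      apply Matrix.inv_eq_right_inv
      rw [smul_mul_smul_comm, inv_mul_cancel₀ hc, one_smul,
        Matrix.mul_nonsing_inv _ hMdet]
    have hACunit : IsUnit (C⁻¹ + Z * Css⁻¹⁻¹ * Zᴴ) := by
      rw [hCinv, hCssii, hMscaled]
      have hcast : c⁻¹ = ((ρ⁻¹ : ℝ) : ℂ) := by rw [hcdef]; push_cast; ring
      rw [hcast]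
      exact (aux_posDef_smul hM (by positivity)).isUnit
    have hwood := Matrix.add_mul_mul_inv_eq_sub (A := Css⁻¹) (U := Zᴴ) (C := C) (V := Z)
      hss.inv.isUnit hCunit hACunit
    have e1 : (Css⁻¹ + Zᴴ * C * Z)⁻¹
        = Css - c • (Css * Zᴴ * M⁻¹ * Z * Css) := by
      rw [hwood, hCssii, hCinv, hMscaled, hMinv]
      simp only [Matrix.mul_smul, Matrix.smul_mul]
    have e2 : Css⁻¹ + Zᴴ * C * Z = c • N ρ := by
      have hZCZ : Zᴴ * C * Z = k • K := by
        rw [hCdef, Matrix.mul_smul, Matrix.mul_one, Matrix.smul_mul, hKdef]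
      rw [hZCZ, hNdef]
      show Css⁻¹ + k • K = c • (c⁻¹ • Css⁻¹ + s⁻¹ • K)
      rw [smul_add, smul_smul, smul_smul, mul_inv_cancel₀ hc, one_smul, hkdef]
    have hNdet : IsUnit (N ρ).det :=
      (Matrix.isUnit_iff_isUnit_det _).mp (hNpos ρ hρ).isUnit
    have e3 : (c • N ρ)⁻¹ = c⁻¹ • (N ρ)⁻¹ := by
      apply Matrix.inv_eq_right_inv
      rw [smul_mul_smul_comm, mul_inv_cancel₀ hc, one_smul,
        Matrix.mul_nonsing_inv _ hNdet]
    rw [← e1, e2, e3]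
  -- the limit
  have h1 : Tendsto (fun ρ : ℝ => ((ρ : ℂ))⁻¹) atTop (nhds (0 : ℂ)) := by
    have h2 := (Complex.continuous_ofReal.tendsto 0).comp tendsto_inv_atTop_zero
    simpa [Function.comp_def] using h2
  have hNt : Tendsto N atTop (nhds L) := by
    have h3 := (h1.smul_const Css⁻¹).add_const ((σ ^ 2 : ℂ)⁻¹ • K)
    simpa [hNdef, hLdef] using h3
  have hinvCont : ContinuousAt Inv.inv L := by
    apply continuousAt_matrix_inv
    rw [Ring.inverse_eq_inv']
    exact continuousAt_inv₀ hL.det_pos.ne'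
  have hGt : Tendsto (fun ρ : ℝ => (N ρ)⁻¹) atTop (nhds L⁻¹) := hinvCont.tendsto.comp hNt
  have hfin : Tendsto (fun ρ : ℝ => ((ρ : ℂ))⁻¹ • (N ρ)⁻¹) atTop
      (nhds ((0 : ℂ) • L⁻¹)) := h1.smul hGt
  rw [zero_smul] at hfin
  apply hfin.congr'
  filter_upwards [eventually_gt_atTop (0 : ℝ)] with ρ hρ
  exact (key ρ hρ).symm
end

section
/- The two-stage estimator ŝ_G = E[s] + C_{s u} C_{u u}^{-1} û composed of an LMMSE estimate û = C_{u y} C_{yy}^{-1}(y − E[y]) followed by LMMSE estimation of s from û has error covariance C_ss − C_{sy} C_{yy}^{-1} C_{uy}^H (C_{uy} C_{yy}^{-1} C_{uy}^H)^{-1} C_{uy} C_{yy}^{-1} C_{sy}^H. -/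
open ComplexOrder MeasureTheory Matrix BigOperators

lemma stmt11_int_star {Ω : Type*} [MeasurableSpace Ω] {P : Measure Ω} {f : Ω → ℂ}
    (hf : Integrable f P) : Integrable (fun ω => star (f ω)) P := by
  refine ⟨?_, ?_⟩
  · simpa [Complex.star_def] using
      (RCLike.continuous_conj (K := ℂ)).comp_aestronglyMeasurable hf.1
  · simpa [HasFiniteIntegral] using hf.2

theorem stmt11_key {Ω : Type*} [MeasurableSpace Ω] (P : Measure Ω) [IsProbabilityMeasure P]
    {n m : ℕ}
    (Css : Matrix (Fin n) (Fin n) ℂ) (Csy : Matrix (Fin n) (Fin m) ℂ)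
    (Cyy : Matrix (Fin m) (Fin m) ℂ)
    (s : Ω → Fin n → ℂ) (y : Ω → Fin m → ℂ)
    (hintss : ∀ i j, Integrable (fun ω => s ω i * star (s ω j)) P)
    (hintsy : ∀ i j, Integrable (fun ω => s ω i * star (y ω j)) P)
    (hintyy : ∀ i j, Integrable (fun ω => y ω i * star (y ω j)) P)
    (hCss : ∀ i j, ∫ ω, s ω i * star (s ω j) ∂P = Css i j)
    (hCsy : ∀ i j, ∫ ω, s ω i * star (y ω j) ∂P = Csy i j)
    (hCyy : ∀ i j, ∫ ω, y ω i * star (y ω j) ∂P = Cyy i j)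
    (A : Matrix (Fin n) (Fin m) ℂ) (i j : Fin n) :
    ∫ ω, (s ω i - A.mulVec (y ω) i) * star (s ω j - A.mulVec (y ω) j) ∂P =
      (Css - Csy * Aᴴ - A * Csyᴴ + A * Cyy * Aᴴ) i j := by
  have h1 : ∀ ω, (s ω i - A.mulVec (y ω) i) * star (s ω j - A.mulVec (y ω) j) =
      s ω i * star (s ω j)
      - ∑ l, star (A j l) * (s ω i * star (y ω l))
      - ∑ k, A i k * star (s ω j * star (y ω k))
      + ∑ k, ∑ l, (A i k * star (A j l)) * (y ω k * star (y ω l)) := by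
    intro ω
    have e2 : s ω i * star (A.mulVec (y ω) j) =
        ∑ l, star (A j l) * (s ω i * star (y ω l)) := by
      simp only [Matrix.mulVec, dotProduct, star_sum, star_mul', Finset.mul_sum]
      exact Finset.sum_congr rfl fun l _ => by ring
    have e3 : A.mulVec (y ω) i * star (s ω j) =
        ∑ k, A i k * star (s ω j * star (y ω k)) := by
      simp only [Matrix.mulVec, dotProduct, Finset.sum_mul, star_mul', star_star]
      exact Finset.sum_congr rfl fun k _ => by ring
    have e4 : A.mulVec (y ω) i * star (A.mulVec (y ω) j) =
        ∑ k, ∑ l, (A i k * star (A j l)) * (y ω k * star (y ω l)) := by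
      simp only [Matrix.mulVec, dotProduct, star_sum, star_mul', Finset.sum_mul,
        Finset.mul_sum]
      rw [Finset.sum_comm]
      refine Finset.sum_congr rfl fun k _ => Finset.sum_congr rfl fun l _ => by ring
    rw [star_sub, sub_mul, mul_sub, mul_sub, e2, e3, e4]
    ring
  have I2 : Integrable (fun ω => ∑ l, star (A j l) * (s ω i * star (y ω l))) P :=
    integrable_finset_sum _ fun l _ => (hintsy i l).const_mul _
  have I3 : Integrable (fun ω => ∑ k, A i k * star (s ω j * star (y ω k))) P :=
    integrable_finset_sum _ fun k _ => (stmt11_int_star (hintsy j k)).const_mul _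
  have I4 : Integrable (fun ω => ∑ k, ∑ l, (A i k * star (A j l)) * (y ω k * star (y ω l))) P :=
    integrable_finset_sum _ fun k _ => integrable_finset_sum _ fun l _ => (hintyy k l).const_mul _
  have step : ∫ ω, (s ω i - A.mulVec (y ω) i) * star (s ω j - A.mulVec (y ω) j) ∂P
      = (∫ ω, s ω i * star (s ω j) ∂P)
        - (∫ ω, ∑ l, star (A j l) * (s ω i * star (y ω l)) ∂P)
        - (∫ ω, ∑ k, A i k * star (s ω j * star (y ω k)) ∂P)
        + (∫ ω, ∑ k, ∑ l, (A i k * star (A j l)) * (y ω k * star (y ω l)) ∂P) := by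
    have H12 : Integrable (fun ω => s ω i * star (s ω j)
        - ∑ l, star (A j l) * (s ω i * star (y ω l))) P := (hintss i j).sub I2
    have H123 : Integrable (fun ω => s ω i * star (s ω j)
        - ∑ l, star (A j l) * (s ω i * star (y ω l))
        - ∑ k, A i k * star (s ω j * star (y ω k))) P := H12.sub I3
    rw [integral_congr_ae (Filter.Eventually.of_forall h1),
      integral_add H123 I4, integral_sub H12 I3, integral_sub (hintss i j) I2]
  rw [step, hCss]
  have J2 : (∫ ω, ∑ l, star (A j l) * (s ω i * star (y ω l)) ∂P)
      = ∑ l, star (A j l) * Csy i l := by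
    rw [integral_finset_sum _ (fun l _ => (hintsy i l).const_mul _)]
    exact Finset.sum_congr rfl fun l _ => by rw [integral_const_mul, hCsy]
  have J3 : (∫ ω, ∑ k, A i k * star (s ω j * star (y ω k)) ∂P)
      = ∑ k, A i k * star (Csy j k) := by
    rw [integral_finset_sum _ (fun k _ => (stmt11_int_star (hintsy j k)).const_mul _)]
    refine Finset.sum_congr rfl fun k _ => ?_
    rw [integral_const_mul]
    congr 1
    calc ∫ ω, star (s ω j * star (y ω k)) ∂P
        = star (∫ ω, s ω j * star (y ω k) ∂P) := integral_conj
      _ = star (Csy j k) := by rw [hCsy]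
  have J4 : (∫ ω, ∑ k, ∑ l, (A i k * star (A j l)) * (y ω k * star (y ω l)) ∂P)
      = ∑ k, ∑ l, (A i k * star (A j l)) * Cyy k l := by
    rw [integral_finset_sum _ (fun k _ => integrable_finset_sum _
      fun l _ => (hintyy k l).const_mul _)]
    refine Finset.sum_congr rfl fun k _ => ?_
    rw [integral_finset_sum _ (fun l _ => (hintyy k l).const_mul _)]
    exact Finset.sum_congr rfl fun l _ => by rw [integral_const_mul, hCyy]
  rw [J2, J3, J4]
  have M2 : (∑ l, star (A j l) * Csy i l) = (Csy * Aᴴ) i j := by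
    simp only [Matrix.mul_apply, Matrix.conjTranspose_apply]
    exact Finset.sum_congr rfl fun l _ => by ring
  have M3 : (∑ k, A i k * star (Csy j k)) = (A * Csyᴴ) i j := by
    simp only [Matrix.mul_apply, Matrix.conjTranspose_apply]
  have M4 : (∑ k, ∑ l, (A i k * star (A j l)) * Cyy k l) = (A * Cyy * Aᴴ) i j := by
    simp only [Matrix.mul_apply, Matrix.conjTranspose_apply, Finset.sum_mul]
    rw [Finset.sum_comm]
    exact Finset.sum_congr rfl fun l _ => Finset.sum_congr rfl fun k _ => by ring
  rw [M2, M3, M4]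
  simp only [Matrix.add_apply, Matrix.sub_apply]

lemma stmt11_alg {n p m : ℕ}
    (Css : Matrix (Fin n) (Fin n) ℂ) (Csy : Matrix (Fin n) (Fin m) ℂ)
    (Cyy : Matrix (Fin m) (Fin m) ℂ) (Cuy : Matrix (Fin p) (Fin m) ℂ)
    (hyy : Cyy.PosDef)
    (hinv : IsUnit (Cuy * Cyy⁻¹ * Cuyᴴ))
    (A : Matrix (Fin n) (Fin m) ℂ)
    (hA : A = (Csy * Cyy⁻¹ * Cuyᴴ) * (Cuy * Cyy⁻¹ * Cuyᴴ)⁻¹ * (Cuy * Cyy⁻¹)) :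
    Css - Csy * Aᴴ - A * Csyᴴ + A * Cyy * Aᴴ =
      Css - Csy * Cyy⁻¹ * Cuyᴴ * (Cuy * Cyy⁻¹ * Cuyᴴ)⁻¹ * Cuy * Cyy⁻¹ * Csyᴴ := by
  set B := Cuy * Cyy⁻¹ * Cuyᴴ with hB
  set Binv := B⁻¹ with hBinv
  have hdet : IsUnit Cyy.det := (Matrix.isUnit_iff_isUnit_det _).mp hyy.isUnit
  have hBdet : IsUnit B.det := (Matrix.isUnit_iff_isUnit_det _).mp hinv
  have hCyyH : Cyy⁻¹ᴴ = Cyy⁻¹ := by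
    rw [Matrix.conjTranspose_nonsing_inv, hyy.isHermitian.eq]
  have hBH : Bᴴ = B := by
    rw [hB]; simp [Matrix.conjTranspose_mul, hCyyH, Matrix.mul_assoc]
  have hBinvH : Binvᴴ = Binv := by
    rw [hBinv, Matrix.conjTranspose_nonsing_inv, hBH]
  have hAH : Aᴴ = Cyy⁻¹ * Cuyᴴ * Binv * (Cuy * Cyy⁻¹ * Csyᴴ) := by
    rw [hA]
    simp only [Matrix.conjTranspose_mul, hCyyH, hBinvH, Matrix.conjTranspose_conjTranspose]
    simp only [Matrix.mul_assoc]
  have hACyy : A * Cyy = Csy * Cyy⁻¹ * Cuyᴴ * Binv * Cuy := by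
    rw [hA]
    simp only [Matrix.mul_assoc]
    rw [show Cyy⁻¹ * Cyy = 1 from Matrix.nonsing_inv_mul _ hdet, Matrix.mul_one]
  have key2 : A * Cyy * Aᴴ = A * Csyᴴ := by
    rw [hACyy, hAH, hA]
    simp only [Matrix.mul_assoc]
    rw [show Cuy * (Cyy⁻¹ * (Cuyᴴ * (Binv * (Cuy * (Cyy⁻¹ * Csyᴴ)))))
        = B * (Binv * (Cuy * (Cyy⁻¹ * Csyᴴ))) by rw [hB]; simp only [Matrix.mul_assoc],
      hBinv, Matrix.mul_nonsing_inv_cancel_left _ _ hBdet]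
  have key1 : Csy * Aᴴ = A * Csyᴴ := by
    rw [hAH, hA]; simp only [Matrix.mul_assoc]
  rw [key1, key2]
  have h5 : A * Csyᴴ = Csy * Cyy⁻¹ * Cuyᴴ * Binv * Cuy * Cyy⁻¹ * Csyᴴ := by
    rw [hA]; simp only [Matrix.mul_assoc]
  rw [h5]; abel

/-- The two-stage (correlated-grouping) estimator
`ŝ_G = C_{sû} C_{ûû}⁻¹ û` with `û = C_{uy} C_{yy}⁻¹ y` (all vectors zero mean) has error
covariance `C_ss − C_sy C_yy⁻¹ C_uyᴴ (C_uy C_yy⁻¹ C_uyᴴ)⁻¹ C_uy C_yy⁻¹ C_syᴴ`. -/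
theorem stmt11 {Ω : Type*} [MeasurableSpace Ω] (P : Measure Ω) [IsProbabilityMeasure P]
    {n p m : ℕ}
    (Css : Matrix (Fin n) (Fin n) ℂ) (Csy : Matrix (Fin n) (Fin m) ℂ)
    (Cyy : Matrix (Fin m) (Fin m) ℂ) (Cuy : Matrix (Fin p) (Fin m) ℂ)
    (s : Ω → Fin n → ℂ) (y : Ω → Fin m → ℂ)
    (hmeass : Measurable s) (hmeasy : Measurable y)
    (hints : ∀ i, Integrable (fun ω => s ω i) P)
    (hinty : ∀ j, Integrable (fun ω => y ω j) P)
    (hintss : ∀ i j, Integrable (fun ω => s ω i * star (s ω j)) P)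
    (hintsy : ∀ i j, Integrable (fun ω => s ω i * star (y ω j)) P)
    (hintyy : ∀ i j, Integrable (fun ω => y ω i * star (y ω j)) P)
    (hms : ∀ i, ∫ ω, s ω i ∂P = 0)
    (hmy : ∀ j, ∫ ω, y ω j ∂P = 0)
    (hCss : ∀ i j, ∫ ω, s ω i * star (s ω j) ∂P = Css i j)
    (hCsy : ∀ i j, ∫ ω, s ω i * star (y ω j) ∂P = Csy i j)
    (hCyy : ∀ i j, ∫ ω, y ω i * star (y ω j) ∂P = Cyy i j)
    (hyy : Cyy.PosDef)
    (hinv : IsUnit (Cuy * Cyy⁻¹ * Cuyᴴ))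
    (uhat : Ω → Fin p → ℂ)
    (huhat : ∀ ω, uhat ω = (Cuy * Cyy⁻¹).mulVec (y ω))
    (shatG : Ω → Fin n → ℂ)
    (hshatG : ∀ ω, shatG ω =
      ((Csy * Cyy⁻¹ * Cuyᴴ) * (Cuy * Cyy⁻¹ * Cuyᴴ)⁻¹).mulVec (uhat ω)) :
    ∀ i j, ∫ ω, (s ω i - shatG ω i) * star (s ω j - shatG ω j) ∂P =
      (Css - Csy * Cyy⁻¹ * Cuyᴴ * (Cuy * Cyy⁻¹ * Cuyᴴ)⁻¹ * Cuy * Cyy⁻¹ * Csyᴴ) i j := by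
  intro i j
  set A := (Csy * Cyy⁻¹ * Cuyᴴ) * (Cuy * Cyy⁻¹ * Cuyᴴ)⁻¹ * (Cuy * Cyy⁻¹) with hA
  have hsG : ∀ ω, shatG ω = A.mulVec (y ω) := by
    intro ω
    rw [hshatG, huhat, Matrix.mulVec_mulVec, hA]
  have := stmt11_key P Css Csy Cyy s y hintss hintsy hintyy hCss hCsy hCyy A i j
  calc ∫ ω, (s ω i - shatG ω i) * star (s ω j - shatG ω j) ∂P
      = ∫ ω, (s ω i - A.mulVec (y ω) i) * star (s ω j - A.mulVec (y ω) j) ∂P := by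
        exact integral_congr_ae (Filter.Eventually.of_forall fun ω => by simp only [hsG])
    _ = (Css - Csy * Aᴴ - A * Csyᴴ + A * Cyy * Aᴴ) i j := this
    _ = (Css - Csy * Cyy⁻¹ * Cuyᴴ * (Cuy * Cyy⁻¹ * Cuyᴴ)⁻¹ * Cuy * Cyy⁻¹ * Csyᴴ) i j := by
        rw [stmt11_alg Css Csy Cyy Cuy hyy hinv A hA]
end
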